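/- arXiv:1706.05586 — 2 statements merged into one kernel-verified Lean document; each statement's English description precedes it below -/
import Mathlib

section
/- Let J ∈ R^{(n_d n_s)×n_p} with block structure J_{j,k} ∈ R^{n_d}, W ∈ R^{n_s×ℓ_s} and V ∈ R^{n_d×ℓ_d} with orthonormal columns, and Ĵ_i = w_i ⋆ J for each column w_i of W. If V^T [Ĵ_1 … Ĵ_{ℓ_s}] has SVD Φ Ω Ψ^T, then Γ = [φ_1 … φ_{ℓ_d - s}] (the first ℓ_d - s left singular vectors) solves Γ = argmax over Γ̃ ∈ R^{ℓ_d×(ℓ_d-s)} with Γ̃^T Γ̃ = I of ‖(W^T ⊗ (V Γ̃)^T) J‖_F^2. -/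
open Matrix
open scoped BigOperators Kronecker

/-- Squared Frobenius norm of a real matrix. -/
def frobSq {α β : Type*} [Fintype α] [Fintype β] (A : Matrix α β ℝ) : ℝ :=
  ∑ i, ∑ j, A i j ^ 2

/-- `w ⋆ J ∈ ℝ^{n_d × n_p}` with `k`-th column `∑ j, w j • J_{j,k}`. -/
def starOp {nd ns np : ℕ} (w : Fin ns → ℝ) (J : Matrix (Fin ns × Fin nd) (Fin np) ℝ) :
    Matrix (Fin nd) (Fin np) ℝ :=
  Matrix.of fun i k => ∑ j, w j * J (j, i) k

/-- Rectangular "diagonal" matrix of singular values, the column index being a product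
type enumerated by `finProdFinEquiv`. -/
def svDiagR (m : ℕ) (a b : ℕ) (ω : ℕ → ℝ) : Matrix (Fin m) (Fin a × Fin b) ℝ :=
  Matrix.of fun i q => if (i : ℕ) = ((finProdFinEquiv q : Fin (a * b)) : ℕ) then ω i else 0

section Helpers

lemma frobSq_eq_trace {α β : Type*} [Fintype α] [Fintype β] (A : Matrix α β ℝ) :
    frobSq A = (A * Aᵀ).trace := by
  simp [frobSq, Matrix.trace, Matrix.mul_apply, Matrix.diag, sq]

lemma frobSq_mul_orth {α β : Type*} [Fintype α] [Fintype β] [DecidableEq β]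
    (A : Matrix α β ℝ) (P : Matrix β β ℝ) (hP : Pᵀ * P = 1) :
    frobSq (A * Pᵀ) = frobSq A := by
  rw [frobSq_eq_trace, frobSq_eq_trace, Matrix.transpose_mul, Matrix.transpose_transpose,
    Matrix.mul_assoc, ← Matrix.mul_assoc Pᵀ, hP, Matrix.one_mul]

lemma frobSq_reindex {α β γ : Type*} [Fintype α] [Fintype β] [Fintype γ]
    (A : Matrix (α × β) γ ℝ) :
    frobSq A = frobSq (Matrix.of fun b (p : α × γ) => A (p.1, b) p.2) := by
  simp only [frobSq, Matrix.of_apply, Fintype.sum_prod_type]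
  rw [Finset.sum_comm]

lemma sum_range_ite {a b : ℕ} (f : ℕ → ℝ) :
    ∑ k ∈ Finset.range a, (if k < b then f k else 0) = ∑ k ∈ Finset.range (min a b), f k := by
  rw [← Finset.sum_subset (Finset.range_subset_range.2 (min_le_left a b))]
  · exact Finset.sum_congr rfl fun x hx =>
      if_pos ((Finset.mem_range.1 hx).trans_le (min_le_right a b))
  · intro x hx hx'
    have : ¬ x < b := fun h => hx' (Finset.mem_range.2 (lt_min (Finset.mem_range.1 hx) h))
    simp [this]

lemma sum_fin_ite {a b : ℕ} (f : ℕ → ℝ) :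
    ∑ t : Fin a, (if (t : ℕ) < b then f t else 0) = ∑ k ∈ Finset.range (min a b), f k := by
  rw [Fin.sum_univ_eq_sum_range (fun k => if k < b then f k else 0) a, sum_range_ite]

lemma sum_ite_coe {n : ℕ} (v : ℕ) (a : Fin n → ℝ) :
    (∑ i : Fin n, if (i : ℕ) = v then a i else 0) = if h : v < n then a ⟨v, h⟩ else 0 := by
  split
  · next h =>
    rw [Finset.sum_eq_single (⟨v, h⟩ : Fin n)]
    · simp
    · intro b _ hb; simp [Fin.ext_iff] at hb ⊢; omega
    · simp
  · next h =>
    apply Finset.sum_eq_zero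
    intro i _
    have : (i : ℕ) ≠ v := fun hh => h (hh ▸ i.isLt)
    simp [this]

lemma frobSq_svDiag {ld ls np m : ℕ} (ω : ℕ → ℝ) (M : Matrix (Fin ld) (Fin m) ℝ) :
    frobSq (Mᵀ * svDiagR ld ls np ω)
      = ∑ i : Fin ld, (if (i : ℕ) < ls * np then ω i ^ 2 else 0) * ∑ b, (M i b) ^ 2 := by
  have hcol : ∀ (b : Fin m) (q : Fin ls × Fin np),
      (Mᵀ * svDiagR ld ls np ω) b q
        = (if h : ((finProdFinEquiv q : Fin (ls*np)) : ℕ) < ld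
            then M ⟨_, h⟩ b * ω ((finProdFinEquiv q : Fin (ls*np)) : ℕ) else 0) := by
    intro b q
    rw [Matrix.mul_apply]
    have : ∀ i : Fin ld, Mᵀ b i * svDiagR ld ls np ω i q
        = if (i : ℕ) = ((finProdFinEquiv q : Fin (ls*np)) : ℕ) then M i b * ω i else 0 := by
      intro i
      simp only [svDiagR, Matrix.of_apply, Matrix.transpose_apply]
      split <;> simp_all
    simp_rw [this]
    rw [sum_ite_coe]
  simp only [frobSq]
  simp_rw [hcol]
  have : ∀ b : Fin m,
      (∑ q : Fin ls × Fin np, (if h : ((finProdFinEquiv q : Fin (ls*np)) : ℕ) < ld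
            then M ⟨_, h⟩ b * ω ((finProdFinEquiv q : Fin (ls*np)) : ℕ) else 0) ^ 2)
      = ∑ i : Fin ld, (if (i : ℕ) < ls * np then ω i ^ 2 * M i b ^ 2 else 0) := by
    intro b
    rw [← Equiv.sum_comp finProdFinEquiv.symm
      (fun q => (if h : ((finProdFinEquiv q : Fin (ls*np)) : ℕ) < ld
            then M ⟨_, h⟩ b * ω ((finProdFinEquiv q : Fin (ls*np)) : ℕ) else 0) ^ 2)]
    simp only [Equiv.apply_symm_apply]
    have l1 : ∀ t : Fin (ls*np), (if h : (t : ℕ) < ld then M ⟨_, h⟩ b * ω t else 0) ^ 2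
        = if (t : ℕ) < ld
            then (fun k => (ω k)^2 * (if hk : k < ld then M ⟨k, hk⟩ b else 0)^2) (t:ℕ) else 0 := by
      intro t
      split
      · next h => simp only [h, dif_pos]; ring
      · simp
    simp_rw [l1]
    rw [sum_fin_ite (fun k => (ω k)^2 * (if hk : k < ld then M ⟨k, hk⟩ b else 0)^2)]
    have l2 : ∀ i : Fin ld, (if (i : ℕ) < ls * np then ω i ^ 2 * M i b ^ 2 else 0)
        = if (i : ℕ) < ls*np
            then (fun k => (ω k)^2 * (if hk : k < ld then M ⟨k, hk⟩ b else 0)^2) (i:ℕ) else 0 := by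
      intro i
      split
      · simp
      · rfl
    rw [Finset.sum_congr rfl (fun i _ => l2 i),
      sum_fin_ite (fun k => (ω k)^2 * (if hk : k < ld then M ⟨k, hk⟩ b else 0)^2), min_comm]
  simp_rw [this]
  rw [Finset.sum_comm]
  apply Finset.sum_congr rfl
  intro i _
  rw [Finset.mul_sum]
  apply Finset.sum_congr rfl
  intro b _
  split <;> simp

lemma key_ineq {n m : ℕ} (c r : Fin n → ℝ)
    (hc : ∀ i j : Fin n, i ≤ j → c j ≤ c i) (hc0 : ∀ i, 0 ≤ c i)
    (hr0 : ∀ i, 0 ≤ r i) (hr1 : ∀ i, r i ≤ 1)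
    (hsum : ∑ i : Fin n, r i = ∑ i : Fin n, (if (i : ℕ) < m then (1 : ℝ) else 0)) :
    ∑ i : Fin n, c i * r i ≤ ∑ i : Fin n, c i * (if (i : ℕ) < m then (1 : ℝ) else 0) := by
  set t : ℝ := if h : m < n then c ⟨m, h⟩ else 0 with ht
  have key : ∀ i : Fin n, c i * r i - c i * (if (i : ℕ) < m then (1:ℝ) else 0)
      ≤ t * r i - t * (if (i : ℕ) < m then (1:ℝ) else 0) := by
    intro i
    by_cases him : (i : ℕ) < m
    · simp only [him, if_pos, mul_one]
      have hti : t ≤ c i := by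
        rw [ht]
        split
        · next h => exact hc i ⟨m, h⟩ (by simp [Fin.le_def]; omega)
        · exact hc0 i
      nlinarith [hr1 i]
    · simp only [him, if_neg, not_false_iff, mul_zero]
      have hmn : m < n := lt_of_le_of_lt (le_of_not_gt him) i.isLt
      have hti : c i ≤ t := by
        rw [ht, dif_pos hmn]
        exact hc ⟨m, hmn⟩ i (by simp [Fin.le_def]; omega)
      nlinarith [hr0 i]
  have h2 : ∑ i : Fin n, (c i * r i - c i * (if (i : ℕ) < m then (1:ℝ) else 0))
      ≤ ∑ i : Fin n, (t * r i - t * (if (i : ℕ) < m then (1:ℝ) else 0)) :=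
    Finset.sum_le_sum fun i _ => key i
  rw [Finset.sum_sub_distrib, Finset.sum_sub_distrib, ← Finset.mul_sum, ← Finset.mul_sum,
    hsum] at h2
  linarith

lemma row_norm_le_one {n m : ℕ} (M : Matrix (Fin n) (Fin m) ℝ) (hM : Mᵀ * M = 1)
    (i : Fin n) : ∑ b, (M i b) ^ 2 ≤ 1 := by
  set P := M * Mᵀ with hP
  have hPP : P * P = P := by
    rw [hP, Matrix.mul_assoc, ← Matrix.mul_assoc Mᵀ, hM, Matrix.one_mul]
  have hdiag : P i i = ∑ b, (M i b) ^ 2 := by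
    simp [hP, Matrix.mul_apply, sq]
  have hsym : ∀ j, P j i = P i j := by
    intro j; simp [hP, Matrix.mul_apply, mul_comm]
  have h1 : P i i = ∑ j, (P i j) ^ 2 := by
    conv_lhs => rw [← hPP]
    rw [Matrix.mul_apply]
    exact Finset.sum_congr rfl fun j _ => by rw [hsym j, sq]
  have h2 : (P i i) ^ 2 ≤ P i i := by
    conv_rhs => rw [h1]
    exact Finset.single_le_sum (f := fun j => (P i j)^2) (fun j _ => sq_nonneg _)
      (Finset.mem_univ i)
  rw [← hdiag]
  nlinarith [h2]

lemma sum_row_norms {n m : ℕ} (M : Matrix (Fin n) (Fin m) ℝ) (hM : Mᵀ * M = 1) :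
    ∑ i : Fin n, ∑ b, (M i b) ^ 2 = (m : ℝ) := by
  rw [Finset.sum_comm]
  have : ∀ b : Fin m, ∑ i : Fin n, (M i b)^2 = (Mᵀ * M) b b := by
    intro b; simp [Matrix.mul_apply, sq]
  simp_rw [this, hM]
  simp [Matrix.one_apply]

lemma sum3 {α β γ : Type*} [Fintype α] [Fintype β] [Fintype γ] (f : α → β → γ → ℝ) :
    ∑ a, ∑ b, ∑ c, f a b c = ∑ b, ∑ c, ∑ a, f a b c := by
  rw [Finset.sum_comm]
  exact Finset.sum_congr rfl fun b _ => Finset.sum_comm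

lemma kron_entry {nd ns np ls ld m : ℕ}
    (J : Matrix (Fin ns × Fin nd) (Fin np) ℝ)
    (W : Matrix (Fin ns) (Fin ls) ℝ) (V : Matrix (Fin nd) (Fin ld) ℝ)
    (Γ : Matrix (Fin ld) (Fin m) ℝ) (a : Fin ls) (b : Fin m) (k : Fin np) :
    ((Wᵀ ⊗ₖ (V * Γ)ᵀ) * J) (a, b) k
      = (Γᵀ * (Vᵀ * (Matrix.of fun i (q : Fin ls × Fin np) =>
          starOp (fun j => W j q.1) J i q.2))) b (a, k) := by
  simp only [Matrix.mul_apply, Matrix.kroneckerMap_apply, Matrix.transpose_apply,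
    Matrix.of_apply, starOp, Fintype.sum_prod_type, Finset.sum_mul, Finset.mul_sum]
  rw [sum3 (fun (x : Fin ns) (x1 : Fin nd) (x2 : Fin ld) =>
    W x a * (V x1 x2 * Γ x2 b) * J (x, x1) k), Finset.sum_comm]
  apply Finset.sum_congr rfl
  intro x1 _
  apply Finset.sum_congr rfl
  intro x2 _
  apply Finset.sum_congr rfl
  intro x _
  ring

end Helpers

/-- Let `W, V` have orthonormal columns, `Ĵ_a = w_a ⋆ J` for the columns `w_a` of `W`,
and let `Vᵀ [Ĵ_1 … Ĵ_{ℓ_s}] = Φ Ω Ψᵀ` be an SVD with decreasing singular values.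
Then `Γ = [φ_1 … φ_{ℓ_d - s}]` (the first `ℓ_d - s` left singular vectors) maximizes
`‖(Wᵀ ⊗ (V Γ̃)ᵀ) J‖_F²` over all `Γ̃ ∈ ℝ^{ℓ_d × (ℓ_d - s)}` with `Γ̃ᵀ Γ̃ = I`. -/
theorem downdating_detectors_optimal
    (nd ns np ls ld s : ℕ) (hs : s < ld)
    (J : Matrix (Fin ns × Fin nd) (Fin np) ℝ)
    (W : Matrix (Fin ns) (Fin ls) ℝ) (V : Matrix (Fin nd) (Fin ld) ℝ)
    (hW : Wᵀ * W = 1) (hV : Vᵀ * V = 1)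
    (Φ : Matrix (Fin ld) (Fin ld) ℝ) (Ψ : Matrix (Fin ls × Fin np) (Fin ls × Fin np) ℝ)
    (ω : ℕ → ℝ)
    (hΦ : Φᵀ * Φ = 1) (hΨ : Ψᵀ * Ψ = 1)
    (hword : ∀ i j : ℕ, i ≤ j → ω j ≤ ω i) (hw0 : ∀ i, 0 ≤ ω i)
    (hSVD : Vᵀ * (Matrix.of fun i (q : Fin ls × Fin np) => starOp (fun j => W j q.1) J i q.2)
      = Φ * svDiagR ld ls np ω * Ψᵀ) :
    IsGreatest
      {x : ℝ | ∃ Γt : Matrix (Fin ld) (Fin (ld - s)) ℝ, Γtᵀ * Γt = 1 ∧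
        x = frobSq ((Wᵀ ⊗ₖ (V * Γt)ᵀ) * J)}
      (frobSq ((Wᵀ ⊗ₖ (V * Φ.submatrix id (Fin.castLE (Nat.sub_le ld s)))ᵀ) * J)) := by
  have hΦΦ : Φ * Φᵀ = 1 := mul_eq_one_comm.mp hΦ
  set c : Fin ld → ℝ := fun i => if (i : ℕ) < ls * np then ω i ^ 2 else 0 with hcdef
  -- objective formula
  have key : ∀ Γ : Matrix (Fin ld) (Fin (ld - s)) ℝ,
      frobSq ((Wᵀ ⊗ₖ (V * Γ)ᵀ) * J)
        = ∑ i : Fin ld, c i * ∑ b, ((Φᵀ * Γ) i b) ^ 2 := by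
    intro Γ
    have h1 : frobSq ((Wᵀ ⊗ₖ (V * Γ)ᵀ) * J)
        = frobSq (Γᵀ * (Vᵀ * (Matrix.of fun i (q : Fin ls × Fin np) =>
            starOp (fun j => W j q.1) J i q.2))) := by
      rw [frobSq_reindex]
      congr 1
      ext b p
      exact kron_entry J W V Γ p.1 b p.2
    have h2 : Γᵀ * (Vᵀ * (Matrix.of fun i (q : Fin ls × Fin np) =>
          starOp (fun j => W j q.1) J i q.2))
        = (Γᵀ * Φ * svDiagR ld ls np ω) * Ψᵀ := by
      rw [hSVD, ← Matrix.mul_assoc, ← Matrix.mul_assoc]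
    have h3 : Γᵀ * Φ = (Φᵀ * Γ)ᵀ := by
      rw [Matrix.transpose_mul, Matrix.transpose_transpose]
    rw [h1, h2, frobSq_mul_orth _ Ψ hΨ, h3, frobSq_svDiag]
  have hcmono : ∀ i j : Fin ld, i ≤ j → c j ≤ c i := by
    intro i j hij
    simp only [hcdef]
    by_cases hj : (j : ℕ) < ls * np
    · have hi : (i : ℕ) < ls * np := lt_of_le_of_lt (Fin.le_def.mp hij) hj
      simp only [hj, hi, if_pos]
      exact pow_le_pow_left₀ (hw0 j) (hword i j (Fin.le_def.mp hij)) 2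
    · simp only [hj, if_neg, not_false_iff]
      split
      · exact sq_nonneg _
      · exact le_rfl
  have hc0 : ∀ i, 0 ≤ c i := by
    intro i
    simp only [hcdef]
    split
    · exact sq_nonneg _
    · exact le_rfl
  set Γ0 := Φ.submatrix id (Fin.castLE (Nat.sub_le ld s)) with hΓ0def
  have hM0 : ∀ (i : Fin ld) (b : Fin (ld - s)),
      (Φᵀ * Γ0) i b = if (i : ℕ) = (b : ℕ) then 1 else 0 := by
    intro i b
    have h : (Φᵀ * Γ0) i b = (Φᵀ * Φ) i (Fin.castLE (Nat.sub_le ld s) b) := by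
      simp [hΓ0def, Matrix.mul_apply, Matrix.submatrix_apply]
    rw [h, hΦ]
    simp [Matrix.one_apply, Fin.ext_iff]
  have hr0eq : ∀ i : Fin ld, (∑ b, ((Φᵀ * Γ0) i b) ^ 2)
      = if (i : ℕ) < ld - s then (1:ℝ) else 0 := by
    intro i
    simp_rw [hM0]
    have h : ∀ b : Fin (ld - s), ((if (i:ℕ) = (b:ℕ) then (1:ℝ) else 0))^2
        = if (b:ℕ) = (i:ℕ) then (1:ℝ) else 0 := by
      intro b
      by_cases hib : (i:ℕ) = (b:ℕ)
      · simp [hib]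
      · simp [hib, Ne.symm hib]
    simp_rw [h]
    rw [sum_ite_coe (i:ℕ) (fun _ => (1:ℝ))]
    by_cases hi : (i:ℕ) < ld - s <;> simp [hi]
  have hΓ0orth : Γ0ᵀ * Γ0 = 1 := by
    ext b b'
    have h : (Γ0ᵀ * Γ0) b b'
        = (Φᵀ * Φ) (Fin.castLE (Nat.sub_le ld s) b) (Fin.castLE (Nat.sub_le ld s) b') := by
      simp [hΓ0def, Matrix.mul_apply, Matrix.submatrix_apply]
    rw [h, hΦ]
    simp [Matrix.one_apply, Fin.ext_iff]
  have hval : frobSq ((Wᵀ ⊗ₖ (V * Γ0)ᵀ) * J)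
      = ∑ i : Fin ld, c i * (if (i : ℕ) < ld - s then (1:ℝ) else 0) := by
    rw [key Γ0]
    exact Finset.sum_congr rfl fun i _ => by rw [hr0eq i]
  constructor
  · exact ⟨Γ0, hΓ0orth, rfl⟩
  · rintro x ⟨Γ, hΓ, rfl⟩
    rw [key Γ, hval]
    have hMM : (Φᵀ * Γ)ᵀ * (Φᵀ * Γ) = 1 := by
      rw [Matrix.transpose_mul, Matrix.transpose_transpose, Matrix.mul_assoc,
        ← Matrix.mul_assoc Φ, hΦΦ, Matrix.one_mul, hΓ]
    apply key_ineq c _ hcmono hc0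
    · intro i
      exact Finset.sum_nonneg fun b _ => sq_nonneg _
    · intro i
      exact row_norm_le_one _ hMM i
    · rw [sum_row_norms _ hMM, sum_fin_ite (fun _ => (1:ℝ)),
        min_eq_right (Nat.sub_le ld s)]
      simp
end

section
/- Let [W W_c] ∈ R^{n_s×n_s} be orthogonal, V ∈ R^{n_d×ℓ_d} with orthonormal columns, J̃_k = v_k ⊛ J, and let W_c^T [J̃_1 … J̃_{ℓ_d}] = Φ Ω Ψ^T be an SVD. Then Γ = [φ_1 … φ_s] maximizes ‖([W, W_c Γ̃]^T ⊗ V^T) J‖_F^2 over Γ̃ ∈ R^{(n_s−ℓ_s)×s} with orthonormal columns, and for any such Γ̃, ‖([W, W_c Γ̃]^T ⊗ V^T) J‖_F^2 = ‖W^T [J̃_1 … J̃_{ℓ_d}]‖_F^2 + ‖Γ̃^T W_c^T [J̃_1 … J̃_{ℓ_d}]‖_F^2. -/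
open Matrix
open scoped BigOperators Kronecker

/-- For `v ∈ ℝ^{n_d}`, `v ⊛ J ∈ ℝ^{n_s × n_p}` has `(j,k)` entry `vᵀ J_{j,k}`. -/
def circStarOp {nd ns np : ℕ} (v : Fin nd → ℝ) (J : Matrix (Fin ns × Fin nd) (Fin np) ℝ) :
    Matrix (Fin ns) (Fin np) ℝ :=
  Matrix.of fun j k => ∑ i, v i * J (j, i) k

set_option linter.unusedSectionVars false

namespace AddSrc

variable {α β γ : Type*} [Fintype α] [Fintype β] [Fintype γ]

lemma frobSq_eq_trace (A : Matrix α β ℝ) : frobSq A = Matrix.trace (A * Aᵀ) := by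
  simp [frobSq, Matrix.trace, Matrix.mul_apply, Matrix.diag, sq]

lemma frobSq_fromRows (A : Matrix α γ ℝ) (B : Matrix β γ ℝ) :
    frobSq (Matrix.fromRows A B) = frobSq A + frobSq B := by
  simp [frobSq, Fintype.sum_sum_type, Matrix.fromRows_apply_inl, Matrix.fromRows_apply_inr]

lemma frobSq_mul_orth [DecidableEq β] (A : Matrix α β ℝ) (Q : Matrix γ β ℝ)
    (hQ : Qᵀ * Q = 1) : frobSq (A * Qᵀ) = frobSq A := by
  rw [frobSq_eq_trace, frobSq_eq_trace, Matrix.transpose_mul, Matrix.transpose_transpose,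
    Matrix.mul_assoc, ← Matrix.mul_assoc Qᵀ, hQ, Matrix.one_mul]

lemma sum_ite_val {m : ℕ} (n : ℕ) (f : Fin m → ℝ) :
    (∑ i : Fin m, if (i : ℕ) = n then f i else 0)
      = if h : n < m then f ⟨n, h⟩ else 0 := by
  split_ifs with h
  · rw [Finset.sum_eq_single (⟨n, h⟩ : Fin m)]
    · simp
    · intro i _ hi
      rw [if_neg]; exact fun hc => hi (Fin.ext hc)
    · simp
  · apply Finset.sum_eq_zero; intro i _
    rw [if_neg]; omega

lemma frobSq_kron {nd ns np ld : ℕ} {σ : Type*} [Fintype σ]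
    (A : Matrix (Fin ns) σ ℝ) (V : Matrix (Fin nd) (Fin ld) ℝ)
    (J : Matrix (Fin ns × Fin nd) (Fin np) ℝ) :
    frobSq ((Aᵀ ⊗ₖ Vᵀ) * J)
      = frobSq (Aᵀ * Matrix.of fun j (q : Fin ld × Fin np) =>
          circStarOp (fun i => V i q.1) J j q.2) := by
  have key : ∀ (r : σ) (b : Fin ld) (k : Fin np),
      ((Aᵀ ⊗ₖ Vᵀ) * J) (r, b) k
        = (Aᵀ * Matrix.of fun j (q : Fin ld × Fin np) =>
            circStarOp (fun i => V i q.1) J j q.2) r (b, k) := by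
    intro r b k
    simp only [Matrix.mul_apply, Matrix.kroneckerMap_apply, Matrix.transpose_apply,
      Matrix.of_apply, circStarOp, Fintype.sum_prod_type, Finset.mul_sum]
    apply Finset.sum_congr rfl; intro j _
    apply Finset.sum_congr rfl; intro i _
    ring
  simp only [frobSq, Fintype.sum_prod_type]
  exact Finset.sum_congr rfl fun r _ => Finset.sum_congr rfl fun b _ =>
    Finset.sum_congr rfl fun k _ => by rw [key]

lemma frobSq_mul_svDiag {s m a b : ℕ} (B : Matrix (Fin s) (Fin m) ℝ) (ω : ℕ → ℝ) :
    frobSq (B * svDiagR m a b ω)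
      = ∑ n : Fin (a * b), if h : (n : ℕ) < m then
          (ω (n : ℕ))^2 * (∑ r, (B r ⟨(n : ℕ), h⟩)^2) else 0 := by
  have h1 : ∀ (r : Fin s) (n : Fin (a * b)),
      (B * svDiagR m a b ω) r (finProdFinEquiv.symm n)
        = if h : (n : ℕ) < m then B r ⟨(n : ℕ), h⟩ * ω (n : ℕ) else 0 := by
    intro r n
    rw [Matrix.mul_apply]
    have e1 : ∀ i : Fin m, B r i * svDiagR m a b ω i (finProdFinEquiv.symm n)
        = if (i : ℕ) = (n : ℕ) then B r i * ω i else 0 := by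
      intro i
      simp only [svDiagR, Matrix.of_apply, Equiv.apply_symm_apply, mul_ite, mul_zero]
    rw [Finset.sum_congr rfl (fun i _ => e1 i), sum_ite_val]
  calc frobSq (B * svDiagR m a b ω)
      = ∑ r : Fin s, ∑ n : Fin (a * b),
          ((B * svDiagR m a b ω) r (finProdFinEquiv.symm n))^2 := by
        refine Finset.sum_congr rfl fun r _ => ?_
        exact (Equiv.sum_comp finProdFinEquiv.symm
          (fun q => ((B * svDiagR m a b ω) r q)^2)).symm
    _ = ∑ n : Fin (a * b), ∑ r : Fin s,
          (if h : (n : ℕ) < m then B r ⟨(n : ℕ), h⟩ * ω (n : ℕ) else 0)^2 := by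
        rw [Finset.sum_comm]
        exact Finset.sum_congr rfl fun n _ => Finset.sum_congr rfl fun r _ => by rw [h1]
    _ = ∑ n : Fin (a * b), if h : (n : ℕ) < m then
          (ω (n : ℕ))^2 * (∑ r, (B r ⟨(n : ℕ), h⟩)^2) else 0 := by
        refine Finset.sum_congr rfl fun n _ => ?_
        split_ifs with h
        · rw [Finset.mul_sum]
          exact Finset.sum_congr rfl fun r _ => by ring
        · simp

def colSq (B : Matrix α β ℝ) (j : β) : ℝ := ∑ i, (B i j)^2

lemma colSq_nonneg (B : Matrix α β ℝ) (j : β) : 0 ≤ colSq B j := by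
  apply Finset.sum_nonneg; intro i _; positivity

lemma colSq_eq [DecidableEq β] (B : Matrix α β ℝ) (j : β) : colSq B j = (Bᵀ * B) j j := by
  simp [colSq, Matrix.mul_apply, sq]

lemma colSq_le_one [DecidableEq α] [DecidableEq β] (B : Matrix α β ℝ) (hB : B * Bᵀ = 1)
    (j : β) : colSq B j ≤ 1 := by
  set P := Bᵀ * B with hP
  have hPsymm : Pᵀ = P := by rw [hP, Matrix.transpose_mul, Matrix.transpose_transpose]
  have hPP : P * P = P := by
    rw [hP, Matrix.mul_assoc, ← Matrix.mul_assoc B, hB, Matrix.one_mul]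
  have hdiag : P j j = ∑ i, (P j i)^2 := by
    conv_lhs => rw [← hPP]
    rw [Matrix.mul_apply]
    refine Finset.sum_congr rfl fun i _ => ?_
    have : P i j = P j i := by
      conv_lhs => rw [← hPsymm]
      rfl
    rw [this, sq]
  have hle : (P j j)^2 ≤ P j j := by
    calc (P j j)^2 ≤ ∑ i, (P j i)^2 :=
          Finset.single_le_sum (f := fun i => (P j i)^2)
            (fun i _ => by positivity) (Finset.mem_univ j)
      _ = P j j := hdiag.symm
  rw [colSq_eq, ← hP]
  nlinarith [hle]

lemma sum_colSq [DecidableEq α] [DecidableEq β] (B : Matrix α β ℝ) (hB : B * Bᵀ = 1) :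
    ∑ j, colSq B j = (Fintype.card α : ℝ) := by
  have : ∑ j, colSq B j = Matrix.trace (Bᵀ * B) := by
    simp [colSq_eq, Matrix.trace, Matrix.diag]
  rw [this, Matrix.trace_mul_comm, hB, Matrix.trace_one]

/-- Rearrangement-style inequality. -/
lemma rearr (N s : ℕ) (a : ℕ → ℝ) (ha0 : ∀ i, 0 ≤ a i)
    (hmono : ∀ i j : ℕ, i ≤ j → a j ≤ a i)
    (d : ℕ → ℝ) (hd0 : ∀ n, 0 ≤ d n) (hd1 : ∀ n, d n ≤ 1)
    (hsum : ∑ n ∈ Finset.range N, d n ≤ (s : ℝ)) :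
    ∑ n ∈ Finset.range N, a n * d n
      ≤ ∑ n ∈ Finset.range N, (if n < s then a n else 0) := by
  rcases le_or_gt N s with hNs | hsN
  · calc ∑ n ∈ Finset.range N, a n * d n
        ≤ ∑ n ∈ Finset.range N, a n := by
          refine Finset.sum_le_sum fun n _ => ?_
          nlinarith [ha0 n, hd0 n, hd1 n]
      _ = _ := by
          refine (Finset.sum_congr rfl fun n hn => ?_).symm
          rw [if_pos]
          exact lt_of_lt_of_le (Finset.mem_range.1 hn) hNs
  · set t := a s with ht
    have ht0 : 0 ≤ t := ha0 s
    have step : ∀ n, a n * d n ≤ (if n < s then a n - t else 0) + t * d n := by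
      intro n
      split_ifs with h
      · have : t ≤ a n := hmono n s (le_of_lt h)
        nlinarith [hd0 n, hd1 n]
      · have : a n ≤ t := hmono s n (le_of_not_gt h)
        nlinarith [hd0 n]
    calc ∑ n ∈ Finset.range N, a n * d n
        ≤ ∑ n ∈ Finset.range N, ((if n < s then a n - t else 0) + t * d n) :=
          Finset.sum_le_sum fun n _ => step n
      _ = (∑ n ∈ Finset.range N, (if n < s then a n - t else 0))
            + t * ∑ n ∈ Finset.range N, d n := by
          rw [Finset.sum_add_distrib, Finset.mul_sum]
      _ ≤ (∑ n ∈ Finset.range N, (if n < s then a n - t else 0)) + t * s := by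
          gcongr
      _ = ∑ n ∈ Finset.range N, (if n < s then a n else 0) := by
          have hfil : (Finset.range N).filter (· < s) = Finset.range s := by
            ext x; simp; omega
          rw [Finset.sum_ite, Finset.sum_ite, hfil]
          simp [Finset.sum_sub_distrib]
          ring

end AddSrc

/-- Let `[W W_c]` be orthogonal, `V` have orthonormal columns, `J̃_b = v_b ⊛ J`, and let
`W_cᵀ [J̃_1 … J̃_{ℓ_d}] = Φ Ω Ψᵀ` be an SVD with decreasing singular values.  Then
`Γ = [φ_1 … φ_s]` maximizes `‖([W, W_c Γ̃]ᵀ ⊗ Vᵀ) J‖_F²` over all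
`Γ̃ ∈ ℝ^{(n_s - ℓ_s) × s}` with orthonormal columns, and for any such `Γ̃`,
`‖([W, W_c Γ̃]ᵀ ⊗ Vᵀ) J‖_F² = ‖Wᵀ [J̃_1 … J̃_{ℓ_d}]‖_F² + ‖Γ̃ᵀ W_cᵀ [J̃_1 … J̃_{ℓ_d}]‖_F²`. -/
theorem adding_sources_optimal_and_split
    (nd ns np ls ld s : ℕ) (hs : s ≤ ns - ls)
    (J : Matrix (Fin ns × Fin nd) (Fin np) ℝ)
    (V : Matrix (Fin nd) (Fin ld) ℝ) (hV : Vᵀ * V = 1)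
    (W : Matrix (Fin ns) (Fin ls) ℝ) (Wc : Matrix (Fin ns) (Fin (ns - ls)) ℝ)
    (hWWc : (Matrix.fromCols W Wc)ᵀ * Matrix.fromCols W Wc = 1)
    (Φ : Matrix (Fin (ns - ls)) (Fin (ns - ls)) ℝ)
    (Ψ : Matrix (Fin ld × Fin np) (Fin ld × Fin np) ℝ) (ω : ℕ → ℝ)
    (hΦ : Φᵀ * Φ = 1) (hΨ : Ψᵀ * Ψ = 1)
    (hword : ∀ i j : ℕ, i ≤ j → ω j ≤ ω i) (hw0 : ∀ i, 0 ≤ ω i)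
    (hSVD : Wcᵀ * (Matrix.of fun j (q : Fin ld × Fin np) => circStarOp (fun i => V i q.1) J j q.2)
      = Φ * svDiagR (ns - ls) ld np ω * Ψᵀ) :
    IsGreatest
      {x : ℝ | ∃ Γt : Matrix (Fin (ns - ls)) (Fin s) ℝ, Γtᵀ * Γt = 1 ∧
        x = frobSq (((Matrix.fromCols W (Wc * Γt))ᵀ ⊗ₖ Vᵀ) * J)}
      (frobSq (((Matrix.fromCols W (Wc * Φ.submatrix id (Fin.castLE hs)))ᵀ ⊗ₖ Vᵀ) * J)) ∧
    ∀ Γt : Matrix (Fin (ns - ls)) (Fin s) ℝ, Γtᵀ * Γt = 1 →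
      frobSq (((Matrix.fromCols W (Wc * Γt))ᵀ ⊗ₖ Vᵀ) * J)
        = frobSq (Wᵀ *
            Matrix.of fun j (q : Fin ld × Fin np) => circStarOp (fun i => V i q.1) J j q.2)
          + frobSq (Γtᵀ * Wcᵀ *
            Matrix.of fun j (q : Fin ld × Fin np) => circStarOp (fun i => V i q.1) J j q.2) := by
  classical
  set M : Matrix (Fin ns) (Fin ld × Fin np) ℝ :=
    Matrix.of fun j (q : Fin ld × Fin np) => circStarOp (fun i => V i q.1) J j q.2 with hM
  -- the split identity, valid for all Γt
  have split : ∀ Γt : Matrix (Fin (ns - ls)) (Fin s) ℝ,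
      frobSq (((Matrix.fromCols W (Wc * Γt))ᵀ ⊗ₖ Vᵀ) * J)
        = frobSq (Wᵀ * M) + frobSq (Γtᵀ * Wcᵀ * M) := by
    intro Γt
    rw [AddSrc.frobSq_kron, ← hM, Matrix.transpose_fromCols, Matrix.fromRows_mul,
      AddSrc.frobSq_fromRows]
    congr 2
    rw [Matrix.transpose_mul]
  have hΦΦt : Φ * Φᵀ = 1 := mul_eq_one_comm.mp hΦ
  -- value of the second summand in terms of column masses of Γtᵀ * Φ
  have extra : ∀ Γt : Matrix (Fin (ns - ls)) (Fin s) ℝ,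
      frobSq (Γtᵀ * Wcᵀ * M)
        = ∑ n ∈ Finset.range (ld * np), (ω n)^2 *
            (if h : n < ns - ls then AddSrc.colSq (Γtᵀ * Φ) ⟨n, h⟩ else 0) := by
    intro Γt
    have e1 : Γtᵀ * Wcᵀ * M = (Γtᵀ * Φ * svDiagR (ns - ls) ld np ω) * Ψᵀ := by
      rw [Matrix.mul_assoc, hSVD, ← Matrix.mul_assoc, ← Matrix.mul_assoc]
    rw [e1, AddSrc.frobSq_mul_orth _ Ψ hΨ, AddSrc.frobSq_mul_svDiag]
    rw [← Fin.sum_univ_eq_sum_range (fun n => (ω n)^2 *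
      (if h : n < ns - ls then AddSrc.colSq (Γtᵀ * Φ) ⟨n, h⟩ else 0)) (ld * np)]
    refine Finset.sum_congr rfl fun n _ => ?_
    by_cases h : (n : ℕ) < ns - ls
    · rw [dif_pos h, dif_pos h]; rfl
    · rw [dif_neg h, dif_neg h, mul_zero]
  -- the distinguished Γ
  set Γ : Matrix (Fin (ns - ls)) (Fin s) ℝ := Φ.submatrix id (Fin.castLE hs) with hΓ
  have hB0 : ∀ (r : Fin s) (i : Fin (ns - ls)),
      (Γᵀ * Φ) r i = if (r : ℕ) = (i : ℕ) then 1 else 0 := by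
    intro r i
    have h := congrFun (congrFun hΦ (Fin.castLE hs r)) i
    simp only [Matrix.mul_apply, Matrix.transpose_apply, Matrix.one_apply] at h ⊢
    simp only [hΓ, Matrix.submatrix_apply, id_eq]
    rw [h]
    congr 1
    simp [Fin.ext_iff]
  have hΓorth : Γᵀ * Γ = 1 := by
    ext r r'
    have h := congrFun (congrFun hΦ (Fin.castLE hs r)) (Fin.castLE hs r')
    simp only [Matrix.mul_apply, Matrix.transpose_apply, Matrix.one_apply] at h ⊢
    simp only [hΓ, Matrix.submatrix_apply, id_eq]
    rw [h]
    congr 1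
    simp [Fin.ext_iff]
  have hcolΓ : ∀ i : Fin (ns - ls),
      AddSrc.colSq (Γᵀ * Φ) i = if (i : ℕ) < s then 1 else 0 := by
    intro i
    unfold AddSrc.colSq
    have : ∀ r : Fin s, ((Γᵀ * Φ) r i)^2 = if (r : ℕ) = (i : ℕ) then 1 else 0 := by
      intro r
      rw [hB0]
      split_ifs <;> norm_num
    rw [Finset.sum_congr rfl fun r _ => this r, AddSrc.sum_ite_val ((i : ℕ)) (fun _ => 1)]
    split_ifs <;> rfl
  -- value at Γ
  have optval : frobSq (Γᵀ * Wcᵀ * M)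
      = ∑ n ∈ Finset.range (ld * np), (if n < s then (ω n)^2 else 0) := by
    rw [extra Γ]
    refine Finset.sum_congr rfl fun n _ => ?_
    by_cases h : n < ns - ls
    · rw [dif_pos h, hcolΓ]
      by_cases h2 : n < s
      · rw [if_pos h2, if_pos h2, mul_one]
      · rw [if_neg h2, if_neg h2, mul_zero]
    · rw [dif_neg h, mul_zero, if_neg (by omega)]
  -- upper bound for arbitrary orthonormal Γt
  have bound : ∀ Γt : Matrix (Fin (ns - ls)) (Fin s) ℝ, Γtᵀ * Γt = 1 →
      frobSq (Γtᵀ * Wcᵀ * M) ≤ frobSq (Γᵀ * Wcᵀ * M) := by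
    intro Γt hΓt
    have hBBt : (Γtᵀ * Φ) * (Γtᵀ * Φ)ᵀ = 1 := by
      rw [Matrix.transpose_mul, Matrix.transpose_transpose, Matrix.mul_assoc,
        ← Matrix.mul_assoc Φ, hΦΦt, Matrix.one_mul, hΓt]
    set d : ℕ → ℝ := fun n =>
      if h : n < ns - ls then AddSrc.colSq (Γtᵀ * Φ) ⟨n, h⟩ else 0 with hd
    have hd0 : ∀ n, 0 ≤ d n := by
      intro n; rw [hd]; dsimp only
      split_ifs with h
      · exact AddSrc.colSq_nonneg _ _
      · exact le_refl 0
    have hd1 : ∀ n, d n ≤ 1 := by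
      intro n; rw [hd]; dsimp only
      split_ifs with h
      · exact AddSrc.colSq_le_one _ hBBt _
      · exact zero_le_one
    have hdm : ∑ n ∈ Finset.range (ns - ls), d n = (s : ℝ) := by
      have e1 : ∑ n ∈ Finset.range (ns - ls), d n = ∑ i : Fin (ns - ls), d (i : ℕ) :=
        (Fin.sum_univ_eq_sum_range d (ns - ls)).symm
      have e2 : ∀ i : Fin (ns - ls), d (i : ℕ) = AddSrc.colSq (Γtᵀ * Φ) i := by
        intro i; rw [hd]; dsimp only
        rw [dif_pos i.isLt]
      rw [e1, Finset.sum_congr rfl fun i _ => e2 i, AddSrc.sum_colSq _ hBBt,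
        Fintype.card_fin]
    have hdsum : ∑ n ∈ Finset.range (ld * np), d n ≤ (s : ℝ) := by
      rw [← hdm]
      rcases le_total (ld * np) (ns - ls) with hle | hle
      · exact Finset.sum_le_sum_of_subset_of_nonneg
          (Finset.range_subset_range.2 hle) (fun n _ _ => hd0 n)
      · refine le_of_eq (Finset.sum_subset (Finset.range_subset_range.2 hle) ?_).symm
        intro x _ hx
        rw [hd]; dsimp only
        rw [dif_neg (by simp at hx; omega)]
    have := AddSrc.rearr (ld * np) s (fun n => (ω n)^2)
      (fun i => by positivity)
      (fun i j hij => by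
        show ω j ^ 2 ≤ ω i ^ 2
        exact pow_le_pow_left₀ (hw0 j) (hword i j hij) 2)
      d hd0 hd1 hdsum
    rw [extra Γt, optval]
    exact this
  refine ⟨⟨⟨Γ, hΓorth, rfl⟩, ?_⟩, fun Γt hΓt => split Γt⟩
  rintro x ⟨Γt, hΓt, rfl⟩
  rw [split Γt, split Γ]
  exact add_le_add_right (bound Γt hΓt) _
end
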